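/- arXiv:1606.05578 — 2 statements merged into one kernel-verified Lean document; each statement's English description precedes it below -/
import Mathlib

section
/- In the deterministic saddle point setup below, with constant step-size ε = 1/√T, the accumulated objective error satisfies Σ_{t=1}^T (F(x_t) − F(x*)) ≤ (√T/2) (‖x_1 − x*‖² + K). In particular the time aggregation of the objective error grows as O(√T). -/
open RealInnerProductSpace InnerProductSpace

lemma grad_ineq' {E : Type*} [NormedAddCommGroup E] [InnerProductSpace ℝ E] [CompleteSpace E]
    {f : E → ℝ} (hc : ConvexOn ℝ Set.univ f) (hd : Differentiable ℝ f) (x y : E) :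
    ⟪gradient f x, y - x⟫_ℝ ≤ f y - f x := by
  set v := y - x with hv
  set φ : ℝ → ℝ := fun s => f (x + s • v) with hφ
  have hline : HasDerivAt (fun s : ℝ => x + s • v) v 0 := by
    simpa using ((hasDerivAt_id (0:ℝ)).smul_const v).const_add x
  have hφd : HasDerivAt φ (fderiv ℝ f x v) 0 := by
    have hx0 : HasFDerivAt f (fderiv ℝ f x) (x + (0:ℝ) • v) := by
      simpa using (hd x).hasFDerivAt
    exact hx0.comp_hasDerivAt 0 hline
  have hφconv : ConvexOn ℝ Set.univ φ := by
    have := hc.comp_affineMap (AffineMap.lineMap x y : ℝ →ᵃ[ℝ] E)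
    simp only [Set.preimage_univ] at this
    have heq : φ = f ∘ (AffineMap.lineMap x y : ℝ →ᵃ[ℝ] E) := by
      funext s
      simp [hφ, AffineMap.lineMap_apply, hv]
      rw [add_comm]
    rw [heq]
    exact this
  have hslope : deriv φ 0 ≤ slope φ 0 1 :=
    hφconv.deriv_le_slope (Set.mem_univ 0) (Set.mem_univ 1) one_pos hφd.differentiableAt
  rw [hφd.deriv] at hslope
  have h1 : slope φ 0 1 = f y - f x := by simp [slope, hφ, hv]
  have h2 : fderiv ℝ f x v = ⟪gradient f x, v⟫_ℝ := by
    have h := (hd x).hasGradientAt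
    rw [hasGradientAt_iff_hasFDerivAt] at h
    rw [h.fderiv, InnerProductSpace.toDual_apply_apply]
  rw [h1, h2] at hslope
  exact hslope

lemma proj_contract' {E : Type*} [NormedAddCommGroup E] [InnerProductSpace ℝ E]
    {X : Set E} (hXconv : Convex ℝ X) {P : E → E}
    (hP : ∀ y, P y ∈ X ∧ ∀ w ∈ X, ‖y - P y‖ ≤ ‖y - w‖) {z : E} (hz : z ∈ X) (y : E) :
    ‖P y - z‖ ^ 2 ≤ ‖y - z‖ ^ 2 := by
  have hmem := (hP y).1
  haveI : Nonempty X := ⟨⟨P y, hmem⟩⟩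
  have hinf : ‖y - P y‖ = ⨅ w : X, ‖y - w‖ := by
    apply le_antisymm
    · exact le_ciInf fun w => (hP y).2 w w.2
    · refine ciInf_le ⟨0, ?_⟩ (⟨P y, hmem⟩ : X)
      rintro r ⟨w, rfl⟩
      exact norm_nonneg _
  have hobtuse := (norm_eq_iInf_iff_real_inner_le_zero hXconv hmem).1 hinf z hz
  have hexp : ‖y - z‖ ^ 2 = ‖y - P y‖ ^ 2 + 2 * ⟪y - P y, P y - z⟫_ℝ + ‖P y - z‖ ^ 2 := by
    have h : y - z = (y - P y) + (P y - z) := by abel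
    rw [h, norm_add_sq_real]
  have h3 : ⟪y - P y, P y - z⟫_ℝ = -⟪y - P y, z - P y⟫_ℝ := by
    rw [show P y - z = -(z - P y) by abel, inner_neg_right]
  nlinarith [sq_nonneg ‖y - P y‖, hobtuse]

lemma telesc' (f : ℕ → ℝ) (N : ℕ) :
    ∑ t ∈ Finset.Icc 1 N, (f t - f (t + 1)) = f 1 - f (N + 1) := by
  induction N with
  | zero => simp
  | succ n ih =>
    rw [Finset.sum_Icc_succ_top (Nat.le_add_left 1 n), ih]
    ring

set_option maxHeartbeats 1000000 in
/-- Part (a) of Theorem 1 of the paper: with constant step-size `ε = 1/√T`, the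
accumulated objective error of the saddle point iterates satisfies
`∑_{t=1}^T (F(x_t) − F(x*)) ≤ (√T/2)(‖x₁ − x*‖² + K)`, i.e. it grows as `O(√T)`. -/
theorem stmt10
    {n M : ℕ} (T : ℕ) (hT : 1 ≤ T)
    (X : Set (EuclideanSpace ℝ (Fin n))) (hXne : X.Nonempty)
    (hXcomp : IsCompact X) (hXconv : Convex ℝ X)
    (P : EuclideanSpace ℝ (Fin n) → EuclideanSpace ℝ (Fin n))
    (hP : ∀ y, P y ∈ X ∧ ∀ w ∈ X, ‖y - P y‖ ≤ ‖y - w‖)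
    (F : EuclideanSpace ℝ (Fin n) → ℝ)
    (hFconv : ConvexOn ℝ Set.univ F) (hFdiff : Differentiable ℝ F)
    (Hc : Fin M → EuclideanSpace ℝ (Fin n) → ℝ)
    (hHconv : ∀ e, ConvexOn ℝ Set.univ (Hc e))
    (hHdiff : ∀ e, Differentiable ℝ (Hc e))
    (Hvec : EuclideanSpace ℝ (Fin n) → EuclideanSpace ℝ (Fin M))
    (hHvec : ∀ y e, Hvec y e = Hc e y)
    (ε δ : ℝ) (hε : 0 < ε) (hδ : 0 < δ)
    (x : ℕ → EuclideanSpace ℝ (Fin n)) (lam : ℕ → EuclideanSpace ℝ (Fin M))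
    (hx1 : x 1 ∈ X) (hlam1 : lam 1 = 0)
    (gx : ℕ → EuclideanSpace ℝ (Fin n))
    (hgx : ∀ t, gx t =
      gradient (fun y => F y + (∑ e, lam t e * Hc e y) - (δ * ε / 2) * ‖lam t‖ ^ 2) (x t))
    (glam : ℕ → EuclideanSpace ℝ (Fin M))
    (hglam : ∀ t, glam t = Hvec (x t) - (δ * ε) • lam t)
    (hxrec : ∀ t, 1 ≤ t → t ≤ T → x (t + 1) = P (x t - ε • gx t))
    (hlamrec : ∀ t, 1 ≤ t → t ≤ T → ∀ e,
      lam (t + 1) e = max ((lam t + ε • glam t) e) 0)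
    (C₁ C₂ : ℝ) (hC₁ : 0 ≤ C₁) (hC₂ : 0 ≤ C₂)
    (hgxb : ∀ t, 1 ≤ t → t ≤ T → ‖gx t‖ ^ 2 ≤ C₁ * (1 + ‖lam t‖ ^ 2))
    (hglamb : ∀ t, 1 ≤ t → t ≤ T → ‖glam t‖ ^ 2 ≤ C₂ + δ ^ 2 * ε ^ 2 * ‖lam t‖ ^ 2)
    (K : ℝ) (hK : K = C₁ + C₂) (hδK : C₁ + δ ^ 2 * ε ^ 2 ≤ δ)
    (hεT : ε = 1 / Real.sqrt T)
    (xstar : EuclideanSpace ℝ (Fin n)) (hxstarX : xstar ∈ X)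
    (hxstarfeas : ∀ e, Hc e xstar ≤ 0)
    (hxstaropt : ∀ y ∈ X, (∀ e, Hc e y ≤ 0) → F xstar ≤ F y) :
    ∑ t ∈ Finset.Icc 1 T, (F (x t) - F xstar)
      ≤ (Real.sqrt T / 2) * (‖x 1 - xstar‖ ^ 2 + K) := by
  -- nonnegativity of the multipliers
  have hlamnn : ∀ t, 1 ≤ t → t ≤ T + 1 → ∀ e, 0 ≤ lam t e := by
    intro t ht1 ht2 e
    rcases Nat.exists_eq_add_of_le ht1 with ⟨s, rfl⟩
    cases s with
    | zero => simp [hlam1]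
    | succ m =>
      have h1m : 1 ≤ m + 1 := by omega
      have hmT : m + 1 ≤ T := by omega
      rw [show 1 + (m + 1) = (m + 1) + 1 by omega, hlamrec (m+1) h1m hmT e]
      exact le_max_right _ _
  -- the key per-step estimate
  have key : ∀ t, 1 ≤ t → t ≤ T →
      2 * ε * (F (x t) - F xstar) ≤
        (‖x t - xstar‖ ^ 2 - ‖x (t+1) - xstar‖ ^ 2)
        + (‖lam t‖ ^ 2 - ‖lam (t+1)‖ ^ 2) + ε ^ 2 * K := by
    intro t ht1 ht2
    have hnn : ∀ e, 0 ≤ lam t e := hlamnn t ht1 (le_trans ht2 (Nat.le_succ T))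
    -- convexity of the augmented objective in x
    have hsumconv : ConvexOn ℝ Set.univ (fun y => ∑ e, lam t e * Hc e y) := by
      have h : ∀ s : Finset (Fin M),
          ConvexOn ℝ Set.univ (fun y => ∑ e ∈ s, lam t e * Hc e y) := by
        intro s
        induction s using Finset.induction_on with
        | empty => simpa using convexOn_const (0:ℝ) convex_univ
        | insert e s hns ih =>
          have h1 : ConvexOn ℝ Set.univ (fun y => lam t e * Hc e y) := by
            simpa [smul_eq_mul] using (hHconv e).smul (hnn e)
          have h2 := h1.add ih
          simp only [Finset.sum_insert hns]
          exact h2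
      exact h Finset.univ
    have hconvt : ConvexOn ℝ Set.univ
        (fun y => F y + (∑ e, lam t e * Hc e y) - (δ * ε / 2) * ‖lam t‖ ^ 2) := by
      have h1 := hFconv.add hsumconv
      have h2 := h1.add_const (-((δ * ε / 2) * ‖lam t‖ ^ 2))
      have heq : (fun y => F y + (∑ e, lam t e * Hc e y) - (δ * ε / 2) * ‖lam t‖ ^ 2)
          = fun y => (F y + ∑ e, lam t e * Hc e y) + -((δ * ε / 2) * ‖lam t‖ ^ 2) := by
        funext y; ring
      rw [heq]
      exact h2
    have hdifft : Differentiable ℝ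
        (fun y => F y + (∑ e, lam t e * Hc e y) - (δ * ε / 2) * ‖lam t‖ ^ 2) := by
      have hdsum : Differentiable ℝ (fun y => ∑ e, lam t e * Hc e y) :=
        Differentiable.fun_sum (fun e _ => (hHdiff e).const_mul _)
      exact (hFdiff.add hdsum).sub_const _
    -- gradient inequality
    have hgrad := grad_ineq' hconvt hdifft (x t) xstar
    rw [← hgx t] at hgrad
    simp only [] at hgrad
    have hinner_flip : ⟪gx t, xstar - x t⟫_ℝ = -⟪gx t, x t - xstar⟫_ℝ := by
      rw [show xstar - x t = -(x t - xstar) by abel, inner_neg_right]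
    have f1 : F (x t) - F xstar ≤ ⟪gx t, x t - xstar⟫_ℝ
        - (∑ e, lam t e * Hc e (x t)) + (∑ e, lam t e * Hc e xstar) := by
      rw [hinner_flip] at hgrad; linarith
    -- x-update estimate
    have f2 : ‖x (t+1) - xstar‖ ^ 2 ≤ ‖x t - xstar‖ ^ 2
        - 2 * ε * ⟪gx t, x t - xstar⟫_ℝ + ε ^ 2 * ‖gx t‖ ^ 2 := by
      rw [hxrec t ht1 ht2]
      have h := proj_contract' hXconv hP hxstarX (x t - ε • gx t)
      have hre : x t - ε • gx t - xstar = (x t - xstar) - ε • gx t := by abel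
      have hrhs : ‖(x t - xstar) - ε • gx t‖ ^ 2 = ‖x t - xstar‖ ^ 2
          - 2 * ε * ⟪gx t, x t - xstar⟫_ℝ + ε ^ 2 * ‖gx t‖ ^ 2 := by
        rw [norm_sub_sq_real, real_inner_smul_right,
          real_inner_comm (x t - xstar) (gx t), norm_smul, mul_pow,
          Real.norm_eq_abs, sq_abs]
        ring
      rw [hre, hrhs] at h
      exact h
    -- lambda-update estimate
    have f3 : ‖lam (t+1)‖ ^ 2 ≤ ‖lam t‖ ^ 2
        + 2 * ε * ((∑ e, lam t e * Hc e (x t)) - δ * ε * ‖lam t‖ ^ 2)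
        + ε ^ 2 * ‖glam t‖ ^ 2 := by
      have hle : ‖lam (t+1)‖ ^ 2 ≤ ‖lam t + ε • glam t‖ ^ 2 := by
        have h1 : ‖lam (t+1)‖ ^ 2 = ∑ e, ‖lam (t+1) e‖ ^ 2 := by
          rw [EuclideanSpace.norm_eq, Real.sq_sqrt (by positivity)]
        have h2 : ‖lam t + ε • glam t‖ ^ 2 = ∑ e, ‖(lam t + ε • glam t) e‖ ^ 2 := by
          rw [EuclideanSpace.norm_eq, Real.sq_sqrt (by positivity)]
        rw [h1, h2]
        apply Finset.sum_le_sum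
        intro e _
        rw [hlamrec t ht1 ht2 e]
        have habs : ∀ v : ℝ, |max v 0| ≤ |v| := by
          intro v
          rcases le_total v 0 with h | h
          · rw [max_eq_right h]; simp
          · rw [max_eq_left h]
        simp only [Real.norm_eq_abs]
        exact pow_le_pow_left₀ (abs_nonneg _) (habs _) 2
      have hexp : ‖lam t + ε • glam t‖ ^ 2 = ‖lam t‖ ^ 2
          + 2 * (ε * ⟪lam t, glam t⟫_ℝ) + ε ^ 2 * ‖glam t‖ ^ 2 := by
        rw [norm_add_sq_real, real_inner_smul_right, norm_smul, mul_pow,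
          Real.norm_eq_abs, sq_abs]
      have hip : ⟪lam t, glam t⟫_ℝ
          = (∑ e, lam t e * Hc e (x t)) - δ * ε * ‖lam t‖ ^ 2 := by
        rw [hglam t, inner_sub_right, real_inner_smul_right, real_inner_self_eq_norm_sq]
        congr 1
        rw [PiLp.inner_apply]
        simp [hHvec]
        exact Finset.sum_congr rfl fun _ _ => mul_comm _ _
      rw [hexp, hip] at hle
      linarith
    -- combine
    have hb : (0:ℝ) ≤ ‖lam t‖ ^ 2 := sq_nonneg _
    have f4 := hgxb t ht1 ht2
    have f5 := hglamb t ht1 ht2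
    have f6 : (∑ e, lam t e * Hc e xstar) ≤ 0 :=
      Finset.sum_nonpos fun e _ => mul_nonpos_of_nonneg_of_nonpos (hnn e) (hxstarfeas e)
    have h1 := mul_le_mul_of_nonneg_left f1 (by linarith : (0:ℝ) ≤ 2 * ε)
    have h2 := mul_le_mul_of_nonneg_left f4 (sq_nonneg ε)
    have h3 := mul_le_mul_of_nonneg_left f5 (sq_nonneg ε)
    have h4 := mul_le_mul_of_nonneg_right hδK (mul_nonneg (sq_nonneg ε) hb)
    have h5 : 2 * ε * (∑ e, lam t e * Hc e xstar) ≤ 0 :=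
      mul_nonpos_of_nonneg_of_nonpos (by linarith) f6
    have h6 : 0 ≤ δ * (ε ^ 2 * ‖lam t‖ ^ 2) :=
      mul_nonneg hδ.le (mul_nonneg (sq_nonneg ε) hb)
    rw [hK]
    linarith [h1, h2, h3, h4, h5, h6, f2, f3]
  -- sum up
  have hsum : ∑ t ∈ Finset.Icc 1 T, (2 * ε * (F (x t) - F xstar)) ≤
      (‖x 1 - xstar‖ ^ 2 - ‖x (T+1) - xstar‖ ^ 2)
      + (‖lam 1‖ ^ 2 - ‖lam (T+1)‖ ^ 2) + T * (ε ^ 2 * K) := by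
    calc ∑ t ∈ Finset.Icc 1 T, (2 * ε * (F (x t) - F xstar))
        ≤ ∑ t ∈ Finset.Icc 1 T, ((‖x t - xstar‖ ^ 2 - ‖x (t+1) - xstar‖ ^ 2)
            + (‖lam t‖ ^ 2 - ‖lam (t+1)‖ ^ 2) + ε ^ 2 * K) := by
          apply Finset.sum_le_sum
          intro t ht
          rw [Finset.mem_Icc] at ht
          exact key t ht.1 ht.2
      _ = (‖x 1 - xstar‖ ^ 2 - ‖x (T+1) - xstar‖ ^ 2)
          + (‖lam 1‖ ^ 2 - ‖lam (T+1)‖ ^ 2) + T * (ε ^ 2 * K) := by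
          rw [Finset.sum_add_distrib, Finset.sum_add_distrib,
            telesc' (fun t => ‖x t - xstar‖ ^ 2) T,
            telesc' (fun t => ‖lam t‖ ^ 2) T,
            Finset.sum_const, Nat.card_Icc]
          simp [nsmul_eq_mul]
  have hb1 : ‖lam 1‖ ^ 2 = 0 := by rw [hlam1]; simp
  have hsum2 : 2 * ε * (∑ t ∈ Finset.Icc 1 T, (F (x t) - F xstar)) ≤
      ‖x 1 - xstar‖ ^ 2 + T * (ε ^ 2 * K) := by
    rw [Finset.mul_sum]
    have := sq_nonneg ‖x (T+1) - xstar‖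
    have := sq_nonneg ‖lam (T+1)‖
    linarith
  -- finish with ε = 1/√T
  have hTpos : (0:ℝ) < T := by exact_mod_cast hT
  have hspos : 0 < Real.sqrt T := Real.sqrt_pos.2 hTpos
  have hs2 : Real.sqrt T ^ 2 = T := Real.sq_sqrt (le_of_lt hTpos)
  have hTe : (T:ℝ) * ε ^ 2 = 1 := by
    rw [hεT, div_pow, one_pow, hs2]
    field_simp
  have hfin : ∑ t ∈ Finset.Icc 1 T, (F (x t) - F xstar)
      ≤ (‖x 1 - xstar‖ ^ 2 + K) / (2 * ε) := by
    rw [le_div_iff₀ (by positivity)]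
    have : (T:ℝ) * (ε ^ 2 * K) = K := by rw [← mul_assoc, hTe, one_mul]
    calc (∑ t ∈ Finset.Icc 1 T, (F (x t) - F xstar)) * (2 * ε)
        = 2 * ε * (∑ t ∈ Finset.Icc 1 T, (F (x t) - F xstar)) := by ring
      _ ≤ ‖x 1 - xstar‖ ^ 2 + T * (ε ^ 2 * K) := hsum2
      _ = ‖x 1 - xstar‖ ^ 2 + K := by rw [this]
  have heq : (‖x 1 - xstar‖ ^ 2 + K) / (2 * ε)
      = (Real.sqrt T / 2) * (‖x 1 - xstar‖ ^ 2 + K) := by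
    rw [hεT]
    field_simp
  rw [heq] at hfin
  exact hfin
end

section
/- In the deterministic saddle point setup below, with constant step-size ε = 1/√T, suppose additionally that F is L_f-Lipschitz and that ‖x‖ ≤ R for all x ∈ X, and let x̄_T = (1/T) Σ_{t=1}^T x_t be the running average of the primal iterates. Then the constraint violation of the averaged iterate satisfies Σ_{e=1}^M max(0, H_e(x̄_T)) ≤ (√M / T) · ( 2√T (δ + 1) ( (√T/2)(‖x_1 − x*‖² + K) + 2 T L_f R ) )^{1/2}, which is O(T^{−1/4}). -/
open Real Set Finset

lemma aux_grad {E : Type*} [NormedAddCommGroup E] [InnerProductSpace ℝ E] [CompleteSpace E]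
    {f : E → ℝ} (hconv : ConvexOn ℝ Set.univ f) (hdiff : Differentiable ℝ f) (a b : E) :
    inner ℝ (gradient f a) (b - a) ≤ f b - f a := by
  set g : ℝ → E := fun s => a + s • (b - a) with hg
  have hder : HasDerivAt g (b - a) 0 := by
    simpa [hg] using ((hasDerivAt_id (0:ℝ)).smul_const (b - a)).const_add a
  have hF : HasFDerivAt f (InnerProductSpace.toDual ℝ E (gradient f a)) a :=
    (hdiff a).hasGradientAt.hasFDerivAt
  have hg0 : g 0 = a := by simp [hg]
  have hcomp : HasDerivAt (f ∘ g) (inner ℝ (gradient f a) (b - a) : ℝ) 0 := by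
    have hF' : HasFDerivAt f (InnerProductSpace.toDual ℝ E (gradient f a)) (g 0) := by
      rw [hg0]; exact hF
    have := hF'.comp_hasDerivAt 0 hder
    simpa [InnerProductSpace.toDual_apply_apply] using this
  have hψconv : ConvexOn ℝ Set.univ (f ∘ g) := by
    have h1 : ConvexOn ℝ ((AffineMap.lineMap a b : ℝ →ᵃ[ℝ] E) ⁻¹' Set.univ)
        (f ∘ (AffineMap.lineMap a b : ℝ →ᵃ[ℝ] E)) := hconv.comp_affineMap _
    have h2 : (f ∘ g) = f ∘ (AffineMap.lineMap a b : ℝ →ᵃ[ℝ] E) := by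
      funext s; simp [hg, AffineMap.lineMap_apply, add_comm]
    rw [h2]; simpa using h1
  have hs := hψconv.le_slope_of_hasDerivAt (Set.mem_univ (0:ℝ)) (Set.mem_univ (1:ℝ))
    zero_lt_one hcomp
  have h1 : (f ∘ g) 1 = f b := by simp [hg]
  have h0 : (f ∘ g) 0 = f a := by simp [hg]
  have hg1 : g 1 = b := by simp [hg]
  rw [slope_def_field] at hs
  rw [h1, h0] at hs
  simpa using hs

lemma aux_convexOn_sum {E ι : Type*} [AddCommGroup E] [Module ℝ E]
    (s : Finset ι) (f : ι → E → ℝ) (h : ∀ i ∈ s, ConvexOn ℝ Set.univ (f i)) :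
    ConvexOn ℝ Set.univ (fun y => ∑ i ∈ s, f i y) := by
  classical
  induction s using Finset.induction with
  | empty => simpa using convexOn_const (0:ℝ) convex_univ
  | @insert a s ha ih =>
    simp_rw [Finset.sum_insert ha]
    exact (h a (Finset.mem_insert_self a s)).add (ih fun i hi => h i (Finset.mem_insert_of_mem hi))

lemma aux_proj {E : Type*} [NormedAddCommGroup E] [InnerProductSpace ℝ E]
    {X : Set E} (hXconv : Convex ℝ X) (P : E → E)
    (hP : ∀ y, P y ∈ X ∧ ∀ w ∈ X, ‖y - P y‖ ≤ ‖y - w‖)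
    (u w : E) (hw : w ∈ X) : ‖P u - w‖ ≤ ‖u - w‖ := by
  have hbdd : BddBelow (Set.range fun z : X => ‖u - z‖) := by
    refine ⟨0, ?_⟩; rintro r ⟨z, rfl⟩; exact norm_nonneg _
  haveI : Nonempty X := ⟨⟨P u, (hP u).1⟩⟩
  have h1 : ‖u - P u‖ = ⨅ z : X, ‖u - z‖ := by
    refine le_antisymm (le_ciInf fun z => (hP u).2 z z.2) (ciInf_le hbdd ⟨P u, (hP u).1⟩)
  have h2 : inner ℝ (u - P u) (w - P u) ≤ (0:ℝ) :=
    (norm_eq_iInf_iff_real_inner_le_zero hXconv (hP u).1).mp h1 w hw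
  have h3 : inner ℝ (u - P u) (P u - w) = -(inner ℝ (u - P u) (w - P u) : ℝ) := by
    rw [← inner_neg_right, neg_sub]
  have h4 : ‖u - w‖ ^ 2 = ‖u - P u‖ ^ 2 + 2 * (inner ℝ (u - P u) (P u - w) : ℝ) + ‖P u - w‖ ^ 2 := by
    have he : u - w = (u - P u) + (P u - w) := by abel
    rw [he, norm_add_sq_real]
  have h5 : ‖P u - w‖ ^ 2 ≤ ‖u - w‖ ^ 2 := by nlinarith [sq_nonneg ‖u - P u‖]
  exact (pow_le_pow_iff_left₀ (norm_nonneg _) (norm_nonneg _) (by norm_num)).mp h5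

lemma aux_abs_max (a b : ℝ) (hb : 0 ≤ b) : |max a 0 - b| ≤ |a - b| := by
  rcases le_total 0 a with h | h
  · rw [max_eq_left h]
  · rw [max_eq_right h, zero_sub, abs_neg, abs_of_nonneg hb, abs_of_nonpos (by linarith)]
    linarith

lemma euclid_norm_sq {m : ℕ} (v : EuclideanSpace ℝ (Fin m)) : ‖v‖^2 = ∑ e, (v e)^2 := by
  rw [EuclideanSpace.norm_eq, Real.sq_sqrt (Finset.sum_nonneg fun i _ => sq_nonneg _)]
  simp [Real.norm_eq_abs, sq_abs]

lemma euclid_inner_sum {m : ℕ} (v w : EuclideanSpace ℝ (Fin m)) :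
    (inner ℝ v w : ℝ) = ∑ e, v e * w e := by
  simp [PiLp.inner_apply, RCLike.inner_apply, mul_comm]

set_option maxHeartbeats 2000000 in
/-- Second part of Corollary 1 of the paper: with constant step-size `ε = 1/√T`,
`F` `L_f`-Lipschitz and `X` bounded by `R`, the constraint violation of the running
average `x̄_T = (1/T) ∑_{t=1}^T x_t` satisfies
`∑ₑ [Hₑ(x̄_T)]₊ ≤ (√M/T)(2√T(δ+1)((√T/2)(‖x₁−x*‖²+K) + 2TL_fR))^{1/2}`,
which is `O(T^{−1/4})`. -/
theorem stmt13
    {n M : ℕ} (T : ℕ) (hT : 1 ≤ T)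
    (X : Set (EuclideanSpace ℝ (Fin n))) (hXne : X.Nonempty)
    (hXcomp : IsCompact X) (hXconv : Convex ℝ X)
    (P : EuclideanSpace ℝ (Fin n) → EuclideanSpace ℝ (Fin n))
    (hP : ∀ y, P y ∈ X ∧ ∀ w ∈ X, ‖y - P y‖ ≤ ‖y - w‖)
    (F : EuclideanSpace ℝ (Fin n) → ℝ)
    (hFconv : ConvexOn ℝ Set.univ F) (hFdiff : Differentiable ℝ F)
    (Hc : Fin M → EuclideanSpace ℝ (Fin n) → ℝ)
    (hHconv : ∀ e, ConvexOn ℝ Set.univ (Hc e))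
    (hHdiff : ∀ e, Differentiable ℝ (Hc e))
    (Hvec : EuclideanSpace ℝ (Fin n) → EuclideanSpace ℝ (Fin M))
    (hHvec : ∀ y e, Hvec y e = Hc e y)
    (ε δ : ℝ) (hε : 0 < ε) (hδ : 0 < δ)
    (x : ℕ → EuclideanSpace ℝ (Fin n)) (lam : ℕ → EuclideanSpace ℝ (Fin M))
    (hx1 : x 1 ∈ X) (hlam1 : lam 1 = 0)
    (gx : ℕ → EuclideanSpace ℝ (Fin n))
    (hgx : ∀ t, gx t =
      gradient (fun y => F y + (∑ e, lam t e * Hc e y) - (δ * ε / 2) * ‖lam t‖ ^ 2) (x t))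
    (glam : ℕ → EuclideanSpace ℝ (Fin M))
    (hglam : ∀ t, glam t = Hvec (x t) - (δ * ε) • lam t)
    (hxrec : ∀ t, 1 ≤ t → t ≤ T → x (t + 1) = P (x t - ε • gx t))
    (hlamrec : ∀ t, 1 ≤ t → t ≤ T → ∀ e,
      lam (t + 1) e = max ((lam t + ε • glam t) e) 0)
    (C₁ C₂ : ℝ) (hC₁ : 0 ≤ C₁) (hC₂ : 0 ≤ C₂)
    (hgxb : ∀ t, 1 ≤ t → t ≤ T → ‖gx t‖ ^ 2 ≤ C₁ * (1 + ‖lam t‖ ^ 2))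
    (hglamb : ∀ t, 1 ≤ t → t ≤ T → ‖glam t‖ ^ 2 ≤ C₂ + δ ^ 2 * ε ^ 2 * ‖lam t‖ ^ 2)
    (K : ℝ) (hK : K = C₁ + C₂) (hδK : C₁ + δ ^ 2 * ε ^ 2 ≤ δ)
    (hεT : ε = 1 / Real.sqrt T)
    (xstar : EuclideanSpace ℝ (Fin n)) (hxstarX : xstar ∈ X)
    (hxstarfeas : ∀ e, Hc e xstar ≤ 0)
    (hxstaropt : ∀ y ∈ X, (∀ e, Hc e y ≤ 0) → F xstar ≤ F y)
    (Lf : ℝ) (hLf : ∀ y z, |F y - F z| ≤ Lf * ‖y - z‖)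
    (R : ℝ) (hR : ∀ y ∈ X, ‖y‖ ≤ R)
    (xbar : EuclideanSpace ℝ (Fin n))
    (hxbar : xbar = (1 / (T : ℝ)) • ∑ t ∈ Finset.Icc 1 T, x t) :
    ∑ e, max 0 (Hc e xbar)
      ≤ (Real.sqrt M / T) *
        Real.sqrt (2 * Real.sqrt T * (δ + 1) *
          ((Real.sqrt T / 2) * (‖x 1 - xstar‖ ^ 2 + K) + 2 * T * Lf * R)) := by
  classical
  -- degenerate case: Lf < 0 forces the space to be a subsingleton
  rcases lt_or_ge Lf 0 with hLf0 | hLf0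
  · have hsub : ∀ y z : EuclideanSpace ℝ (Fin n), y = z := by
      intro y z
      by_contra hne
      have hpos : 0 < ‖y - z‖ := by
        rw [norm_pos_iff, sub_ne_zero]; exact hne
      have h1 := hLf y z
      have h2 : Lf * ‖y - z‖ < 0 := mul_neg_of_neg_of_pos hLf0 hpos
      exact absurd (le_trans (abs_nonneg _) h1) (not_le.mpr h2)
    have hxb : xbar = xstar := hsub _ _
    have hLHS : ∑ e, max 0 (Hc e xbar) = 0 := by
      rw [hxb]
      exact Finset.sum_eq_zero fun e _ => max_eq_left (hxstarfeas e)
    rw [hLHS]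
    positivity
  -- main case
  have hT0 : (0:ℝ) < T := by exact_mod_cast Nat.lt_of_lt_of_le Nat.zero_lt_one hT
  have hs0 : 0 < Real.sqrt T := Real.sqrt_pos.mpr hT0
  have hs2 : Real.sqrt T ^ 2 = (T:ℝ) := Real.sq_sqrt hT0.le
  have hεs : ε * Real.sqrt T = 1 := by rw [hεT]; field_simp
  have hTε2 : (T:ℝ) * ε ^ 2 = 1 := by
    rw [hεT, div_pow, one_pow, hs2]; field_simp
  have hR0 : 0 ≤ R := by
    obtain ⟨y, hy⟩ := hXne
    exact le_trans (norm_nonneg y) (hR y hy)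
  have hxX : ∀ t, 1 ≤ t → t ≤ T → x t ∈ X := by
    intro t ht1 htT
    cases t with
    | zero => omega
    | succ u =>
      rcases Nat.eq_zero_or_pos u with rfl | hu
      · exact hx1
      · rw [hxrec u hu (by omega)]; exact (hP _).1
  have hlamnn : ∀ t, 1 ≤ t → t ≤ T + 1 → ∀ e, 0 ≤ lam t e := by
    intro t ht1 htT e
    cases t with
    | zero => omega
    | succ u =>
      rcases Nat.eq_zero_or_pos u with rfl | hu
      · rw [hlam1]; rfl
      · rw [hlamrec u hu (by omega) e]; exact le_max_right _ _
  have hFb : ∀ t, 1 ≤ t → t ≤ T → F xstar - F (x t) ≤ 2 * Lf * R := by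
    intro t ht1 htT
    have h2 : ‖xstar - x t‖ ≤ 2 * R := by
      calc ‖xstar - x t‖ ≤ ‖xstar‖ + ‖x t‖ := norm_sub_le _ _
        _ ≤ R + R := add_le_add (hR _ hxstarX) (hR _ (hxX t ht1 htT))
        _ = 2 * R := by ring
    calc F xstar - F (x t) ≤ |F xstar - F (x t)| := le_abs_self _
      _ ≤ Lf * ‖xstar - x t‖ := hLf xstar (x t)
      _ ≤ Lf * (2 * R) := mul_le_mul_of_nonneg_left h2 hLf0
      _ = 2 * Lf * R := by ring
  -- Per-step descent inequality
  have step : ∀ (l : EuclideanSpace ℝ (Fin M)), (∀ e, 0 ≤ l e) → ∀ t, 1 ≤ t → t ≤ T →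
      ‖x (t+1) - xstar‖^2 + ‖lam (t+1) - l‖^2 + 2*ε*(∑ e, l e * Hc e (x t))
        ≤ ‖x t - xstar‖^2 + ‖lam t - l‖^2
          + (4*ε*Lf*R + ε^2*K + δ*ε^2*‖l‖^2) := by
    intro l hl t ht1 htT
    have hlamt : ∀ e, 0 ≤ lam t e := fun e => hlamnn t ht1 (by omega) e
    -- primal gradient inequality
    set φ : EuclideanSpace ℝ (Fin n) → ℝ :=
      fun y => F y + (∑ e, lam t e * Hc e y) - (δ * ε / 2) * ‖lam t‖ ^ 2 with hφ
    have hsumconv : ConvexOn ℝ Set.univ (fun y => ∑ e, lam t e * Hc e y) :=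
      aux_convexOn_sum Finset.univ (fun e y => lam t e * Hc e y) (fun e _ => by
        simpa [smul_eq_mul] using (hHconv e).smul (hlamt e))
    have hφconv : ConvexOn ℝ Set.univ φ := by
      have h2 : ConvexOn ℝ Set.univ (fun y => F y + ∑ e, lam t e * Hc e y) :=
        hFconv.add hsumconv
      exact h2.sub (concaveOn_const _ convex_univ)
    have hφdiff : Differentiable ℝ φ := by
      have h1 : Differentiable ℝ (fun y => ∑ e, lam t e * Hc e y) :=
        Differentiable.fun_sum (fun e _ => (hHdiff e).const_mul _)
      exact (hFdiff.add h1).sub_const _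
    have hgx' : gx t = gradient φ (x t) := by rw [hφ]; exact hgx t
    have hgrad := aux_grad hφconv hφdiff (x t) xstar
    rw [← hgx'] at hgrad
    have hP1 : F (x t) + (∑ e, lam t e * Hc e (x t)) - F xstar
        ≤ (inner ℝ (gx t) (x t - xstar) : ℝ) := by
      have hneg : (inner ℝ (gx t) (x t - xstar) : ℝ) = - inner ℝ (gx t) (xstar - x t) := by
        rw [← inner_neg_right, neg_sub]
      have hsum0 : (∑ e, lam t e * Hc e xstar) ≤ 0 :=
        Finset.sum_nonpos fun e _ => mul_nonpos_of_nonneg_of_nonpos (hlamt e) (hxstarfeas e)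
      have hφx : φ xstar - φ (x t)
          = (F xstar + ∑ e, lam t e * Hc e xstar)
            - (F (x t) + ∑ e, lam t e * Hc e (x t)) := by rw [hφ]; ring
      rw [hφx] at hgrad
      rw [hneg]
      linarith [hgrad]
    -- primal distance recursion
    have hx2 : ‖x (t+1) - xstar‖^2
        ≤ ‖x t - xstar‖^2 - 2*ε*(inner ℝ (gx t) (x t - xstar) : ℝ) + ε^2*‖gx t‖^2 := by
      rw [hxrec t ht1 htT]
      have h1 : ‖P (x t - ε • gx t) - xstar‖ ≤ ‖(x t - ε • gx t) - xstar‖ :=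
        aux_proj hXconv P hP _ _ hxstarX
      have h2 : ‖(x t - ε • gx t) - xstar‖^2
          = ‖x t - xstar‖^2 - 2*ε*(inner ℝ (gx t) (x t - xstar):ℝ) + ε^2*‖gx t‖^2 := by
        have he : (x t - ε • gx t) - xstar = (x t - xstar) - ε • gx t := by abel
        rw [he, norm_sub_sq_real, real_inner_smul_right, norm_smul,
          real_inner_comm (x t - xstar) (gx t)]
        simp only [Real.norm_eq_abs, mul_pow, sq_abs]
        ring
      calc ‖P (x t - ε • gx t) - xstar‖^2 ≤ ‖(x t - ε • gx t) - xstar‖^2 :=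
            pow_le_pow_left₀ (norm_nonneg _) h1 2
        _ = _ := h2
    -- dual distance recursion
    have hl2a : ‖lam (t+1) - l‖^2 ≤ ‖(lam t + ε • glam t) - l‖^2 := by
      rw [euclid_norm_sq, euclid_norm_sq]
      apply Finset.sum_le_sum
      intro e _
      have hcomp : |lam (t+1) e - l e| ≤ |(lam t + ε • glam t) e - l e| := by
        rw [hlamrec t ht1 htT e]; exact aux_abs_max _ _ (hl e)
      have h1 : (lam (t+1) - l) e = lam (t+1) e - l e := rfl
      have h2 : ((lam t + ε • glam t) - l) e = (lam t + ε • glam t) e - l e := rfl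
      rw [h1, h2, ← sq_abs (lam (t+1) e - l e), ← sq_abs ((lam t + ε • glam t) e - l e)]
      exact pow_le_pow_left₀ (abs_nonneg _) hcomp 2
    have hl2 : ‖(lam t + ε • glam t) - l‖^2
        = ‖lam t - l‖^2 + 2*ε*(inner ℝ (glam t) (lam t - l) : ℝ) + ε^2*‖glam t‖^2 := by
      have he : (lam t + ε • glam t) - l = (lam t - l) + ε • glam t := by abel
      rw [he, norm_add_sq_real, real_inner_smul_right, norm_smul,
        real_inner_comm (lam t - l) (glam t)]
      simp only [Real.norm_eq_abs, mul_pow, sq_abs]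
      ring
    have hginner : (inner ℝ (glam t) (lam t - l) : ℝ)
        = (∑ e, lam t e * Hc e (x t)) - (∑ e, l e * Hc e (x t))
          - δ*ε*‖lam t‖^2 + δ*ε*(inner ℝ (lam t) l : ℝ) := by
      have hglamte : ∀ e, glam t e = Hc e (x t) - δ*ε*lam t e := by
        intro e
        rw [hglam t]
        have h0 : (Hvec (x t) - (δ*ε) • lam t) e = Hvec (x t) e - (δ*ε)*lam t e := rfl
        rw [h0, hHvec]
      rw [euclid_inner_sum (glam t) (lam t - l), euclid_inner_sum (lam t) l,
        euclid_norm_sq (lam t)]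
      calc ∑ e, glam t e * (lam t - l) e
          = ∑ e, (lam t e * Hc e (x t) - l e * Hc e (x t)
              - δ*ε*(lam t e)^2 + δ*ε*(lam t e * l e)) := by
            apply Finset.sum_congr rfl
            intro e _
            have h1 : (lam t - l) e = lam t e - l e := rfl
            rw [hglamte e, h1]; ring
        _ = _ := by
            simp only [Finset.sum_add_distrib, Finset.sum_sub_distrib, ← Finset.mul_sum]
    -- gradient norm bounds
    have h4 := hgxb t ht1 htT
    have h5 := hglamb t ht1 htT
    have hquad : ε^2*‖gx t‖^2 + ε^2*‖glam t‖^2 ≤ ε^2*K + δ*ε^2*‖lam t‖^2 := by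
      have h6 : (C₁ + δ^2*ε^2)*‖lam t‖^2 ≤ δ*‖lam t‖^2 :=
        mul_le_mul_of_nonneg_right hδK (sq_nonneg _)
      have h7 := mul_le_mul_of_nonneg_left h4 (sq_nonneg ε)
      have h8 := mul_le_mul_of_nonneg_left h5 (sq_nonneg ε)
      have h9 := mul_le_mul_of_nonneg_left h6 (sq_nonneg ε)
      rw [hK]
      nlinarith [h7, h8, h9]
    have hFt := hFb t ht1 htT
    have hinnl : 2*(δ*ε^2)*(inner ℝ (lam t) l : ℝ) ≤ δ*ε^2*‖lam t‖^2 + δ*ε^2*‖l‖^2 := by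
      have h0 : (0:ℝ) ≤ δ*ε^2*‖lam t - l‖^2 := by positivity
      have h1 : ‖lam t - l‖^2 = ‖lam t‖^2 - 2*(inner ℝ (lam t) l:ℝ) + ‖l‖^2 :=
        norm_sub_sq_real _ _
      nlinarith [h0, h1]
    have hP1' := mul_le_mul_of_nonneg_left hP1 (by positivity : (0:ℝ) ≤ 2*ε)
    have hFt' := mul_le_mul_of_nonneg_left hFt (by positivity : (0:ℝ) ≤ 2*ε)
    nlinarith [hx2, hP1', hl2a, hl2, hginner, hquad, hFt', hinnl]
  -- Telescoped inequality
  have tele : ∀ (l : EuclideanSpace ℝ (Fin M)), (∀ e, 0 ≤ l e) → ∀ m : ℕ, m ≤ T →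
      ‖x (m+1) - xstar‖^2 + ‖lam (m+1) - l‖^2
          + 2*ε*(∑ t ∈ Finset.Icc 1 m, ∑ e, l e * Hc e (x t))
        ≤ ‖x 1 - xstar‖^2 + ‖lam 1 - l‖^2
          + m*(4*ε*Lf*R + ε^2*K + δ*ε^2*‖l‖^2) := by
    intro l hl m
    induction m with
    | zero => intro _; simp
    | succ k ih =>
      intro hk
      have h1 := step l hl (k+1) (by omega) hk
      have h2 := ih (by omega)
      rw [Finset.sum_Icc_succ_top (by omega : 1 ≤ k + 1)]
      push_cast
      nlinarith [h1, h2]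
  -- Jensen
  have hJ' : ∀ e, (T:ℝ) * Hc e xbar ≤ ∑ t ∈ Finset.Icc 1 T, Hc e (x t) := by
    intro e
    have hcard : (Finset.Icc 1 T).card = T := by rw [Nat.card_Icc]; omega
    have hw : ∑ _t ∈ Finset.Icc 1 T, (1/(T:ℝ)) = 1 := by
      rw [Finset.sum_const, hcard, nsmul_eq_mul]; field_simp
    have hj := (hHconv e).map_sum_le (f := Hc e) (p := x)
      (fun i _ => by positivity) hw (fun i _ => Set.mem_univ _)
    rw [show (∑ t ∈ Finset.Icc 1 T, (1/(T:ℝ)) • x t) = xbar from by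
      rw [hxbar, Finset.smul_sum]] at hj
    have h2 := mul_le_mul_of_nonneg_left hj hT0.le
    calc (T:ℝ) * Hc e xbar ≤ (T:ℝ) * ∑ t ∈ Finset.Icc 1 T, 1/(T:ℝ) * Hc e (x t) := h2
      _ = ∑ t ∈ Finset.Icc 1 T, Hc e (x t) := by
          rw [← Finset.mul_sum, ← mul_assoc]; field_simp
  -- choose the multiplier
  set hv : EuclideanSpace ℝ (Fin M) := WithLp.toLp 2 (fun e => max 0 (Hc e xbar)) with hhv
  have hhve : ∀ e, hv e = max 0 (Hc e xbar) := fun e => rfl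
  have hhvnn : ∀ e, 0 ≤ hv e := fun e => le_max_left _ _
  set c : ℝ := ε*T/(1+δ) with hc
  have hc0 : 0 ≤ c := by positivity
  set l : EuclideanSpace ℝ (Fin M) := c • hv with hldef
  have hle : ∀ e, l e = c * hv e := fun e => rfl
  have hlnn : ∀ e, 0 ≤ l e := fun e => by rw [hle e]; exact mul_nonneg hc0 (hhvnn e)
  have main := tele l hlnn T le_rfl
  have hV1 : ‖lam 1 - l‖^2 = ‖l‖^2 := by rw [hlam1, zero_sub, norm_neg]
  have hVT : 0 ≤ ‖x (T+1) - xstar‖^2 + ‖lam (T+1) - l‖^2 := by positivity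
  have hsumlow : c*T*(∑ e, (hv e)^2) ≤ ∑ t ∈ Finset.Icc 1 T, ∑ e, l e * Hc e (x t) := by
    rw [Finset.sum_comm]
    have he : ∀ e, c*T*(hv e)^2 ≤ ∑ t ∈ Finset.Icc 1 T, l e * Hc e (x t) := by
      intro e
      rw [← Finset.mul_sum]
      have h1 : hv e * ((T:ℝ) * Hc e xbar) ≤ hv e * (∑ t ∈ Finset.Icc 1 T, Hc e (x t)) :=
        mul_le_mul_of_nonneg_left (hJ' e) (hhvnn e)
      have h2 : (T:ℝ)*(hv e)^2 ≤ hv e * ((T:ℝ) * Hc e xbar) := by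
        rcases le_or_gt (Hc e xbar) 0 with h | h
        · rw [hhve e, max_eq_left h]; simp
        · rw [hhve e, max_eq_right h.le]; exact le_of_eq (by ring)
      calc c*T*(hv e)^2 = c*((T:ℝ)*(hv e)^2) := by ring
        _ ≤ c*(hv e * (∑ t ∈ Finset.Icc 1 T, Hc e (x t))) :=
            mul_le_mul_of_nonneg_left (h2.trans h1) hc0
        _ = l e * ∑ t ∈ Finset.Icc 1 T, Hc e (x t) := by rw [hle e]; ring
    calc c*T*(∑ e, (hv e)^2) = ∑ e, c*T*(hv e)^2 := by rw [Finset.mul_sum]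
      _ ≤ _ := Finset.sum_le_sum (fun e _ => he e)
  have hnormhv : ‖hv‖^2 = ∑ e, (hv e)^2 := euclid_norm_sq hv
  have hll : ‖l‖^2 = c^2*‖hv‖^2 := by
    rw [hldef, norm_smul, mul_pow, Real.norm_eq_abs, sq_abs]
  -- main quantitative bound
  have hDkey : (T:ℝ)*‖hv‖^2 ≤ (1+δ)*(‖x 1 - xstar‖^2 + K + 4*ε*T*Lf*R) := by
    have e1 : ε*(T:ℝ) = c*(1+δ) := by rw [hc]; field_simp
    have h2ε := mul_le_mul_of_nonneg_left hsumlow (by positivity : (0:ℝ) ≤ 2*ε)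
    rw [hV1, hll, hnormhv] at main
    have hmain2 : 2*ε*(c*T*(∑ e, (hv e)^2))
        ≤ ‖x 1 - xstar‖^2 + c^2*(∑ e, (hv e)^2)
          + T*(4*ε*Lf*R + ε^2*K + δ*ε^2*(c^2*(∑ e, (hv e)^2))) := by
      linarith [main, hVT, h2ε]
    have hexp : (T:ℝ)*(4*ε*Lf*R + ε^2*K + δ*ε^2*(c^2*(∑ e, (hv e)^2)))
        = 4*ε*T*Lf*R + K + δ*c^2*(∑ e, (hv e)^2) := by
      linear_combination (K + δ*c^2*(∑ e, (hv e)^2)) * hTε2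
    have h3 : 2*ε*(c*T*(∑ e, (hv e)^2)) = 2*(1+δ)*c^2*(∑ e, (hv e)^2) := by
      linear_combination 2*c*(∑ e, (hv e)^2) * e1
    have h4 : (1+δ)*c^2*(∑ e, (hv e)^2) ≤ ‖x 1 - xstar‖^2 + K + 4*ε*T*Lf*R := by
      nlinarith [hmain2, hexp, h3]
    have h5 : (T:ℝ)*(∑ e, (hv e)^2) = (1+δ)*((1+δ)*c^2*(∑ e, (hv e)^2)) := by
      have e2 : ε^2*(T:ℝ)^2 = (T:ℝ) := by linear_combination (T:ℝ)*hTε2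
      linear_combination (-(∑ e, (hv e)^2))*e2 + (∑ e, (hv e)^2)*(ε*(T:ℝ) + c*(1+δ))*e1
    rw [hnormhv, h5]
    exact mul_le_mul_of_nonneg_left h4 (by positivity)
  -- Cauchy-Schwarz
  have hCS : ∑ e, hv e ≤ Real.sqrt M * ‖hv‖ := by
    have h1 : (∑ e, hv e * 1)^2 ≤ (∑ e, (hv e)^2) * (∑ _e : Fin M, (1:ℝ)^2) :=
      Finset.sum_mul_sq_le_sq_mul_sq _ _ _
    simp only [mul_one, one_pow, Finset.sum_const, Finset.card_univ, Fintype.card_fin,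
      nsmul_eq_mul] at h1
    have hnn : 0 ≤ ∑ e, hv e := Finset.sum_nonneg fun e _ => hhvnn e
    calc ∑ e, hv e = Real.sqrt ((∑ e, hv e)^2) := (Real.sqrt_sq hnn).symm
      _ ≤ Real.sqrt ((M:ℝ) * ‖hv‖^2) := Real.sqrt_le_sqrt (by rw [hnormhv]; linarith [h1])
      _ = Real.sqrt M * ‖hv‖ := by
          rw [Real.sqrt_mul (Nat.cast_nonneg M), Real.sqrt_sq (norm_nonneg _)]
  -- identify the target quantity
  set S : ℝ := 2 * Real.sqrt T * (δ + 1) *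
      ((Real.sqrt T / 2) * (‖x 1 - xstar‖ ^ 2 + K) + 2 * T * Lf * R) with hSdef
  have hSid : S = (T:ℝ)*((1+δ)*(‖x 1 - xstar‖^2 + K + 4*ε*T*Lf*R)) := by
    rw [hSdef]
    linear_combination ((δ+1)*(‖x 1 - xstar‖^2+K) + 4*(δ+1)*(T:ℝ)*Lf*R*ε)*hs2
      + (-(4*(δ+1)*(T:ℝ)*Lf*R*Real.sqrt T))*hεs
  have hS0 : 0 ≤ S := by
    rw [hSid]
    nlinarith [hDkey, hT0, sq_nonneg ‖hv‖, mul_nonneg hT0.le (sq_nonneg ‖hv‖)]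
  have hfin : ‖hv‖ ≤ Real.sqrt S / T := by
    have h2 : ‖hv‖^2 ≤ S / (T:ℝ)^2 := by
      rw [le_div_iff₀ (by positivity), hSid]
      nlinarith [mul_le_mul_of_nonneg_left hDkey hT0.le]
    calc ‖hv‖ = Real.sqrt (‖hv‖^2) := (Real.sqrt_sq (norm_nonneg _)).symm
      _ ≤ Real.sqrt (S/(T:ℝ)^2) := Real.sqrt_le_sqrt h2
      _ = Real.sqrt S / (T:ℝ) := by
          rw [Real.sqrt_div hS0, Real.sqrt_sq hT0.le]
  calc ∑ e, max 0 (Hc e xbar) = ∑ e, hv e := by rfl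
    _ ≤ Real.sqrt M * ‖hv‖ := hCS
    _ ≤ Real.sqrt M * (Real.sqrt S / T) :=
        mul_le_mul_of_nonneg_left hfin (Real.sqrt_nonneg _)
    _ = Real.sqrt M / T * Real.sqrt S := by ring
end
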